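/- Let z and ẑ be block vectors (same block structure) with ‖z‖_F < 1. Then λ_min(e + z) ≥ 1 − ‖z‖_F > 0 (so the blockwise Jordan inverse (e + z)^{-1} exists) and ‖(e + z)^{-1}‖₂ ≤ 1/(1 − ‖z‖_F). If moreover ‖z − ẑ‖_F ≤ ξ for some ξ ≥ 0 with ‖z‖_F + ξ < 1, then ‖(e + z)^{-1} − (e + ẑ)^{-1}‖_F ≤ ξ / (1 − ‖z‖_F − ξ)². -/

import Mathlib

set_option synthInstance.maxHeartbeats 1000000
set_option maxHeartbeats 1000000

noncomputable section
open scoped BigOperators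

namespace SOCP

/-- `E k` is `ℝ^(k+1)`, written as `(x₀; x̄)` with `x̄ ∈ ℝ^k`. -/
abbrev E (k : ℕ) := EuclideanSpace ℝ (Fin (k + 1))

/-- Build an element of `E k` from a plain function. -/
def mk {k : ℕ} (f : Fin (k + 1) → ℝ) : E k := (WithLp.equiv 2 _).symm f

/-- The Euclidean norm `‖x̄‖` of the tail of `x`. -/
def tnorm {k : ℕ} (x : E k) : ℝ := Real.sqrt (∑ i : Fin k, (x i.succ) ^ 2)

/-- First Jordan eigenvalue `λ₁(x) = x₀ + ‖x̄‖`. -/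
def lam1 {k : ℕ} (x : E k) : ℝ := x 0 + tnorm x

/-- Second Jordan eigenvalue `λ₂(x) = x₀ − ‖x̄‖`. -/
def lam2 {k : ℕ} (x : E k) : ℝ := x 0 - tnorm x

/-- Jordan product `x ∘ y = (xᵀy; x₀ȳ + y₀x̄)`. -/
def jmul {k : ℕ} (x y : E k) : E k :=
  mk (fun j => if j = 0 then ∑ i, x i * y i else x 0 * y j + y 0 * x j)

/-- The Jordan identity `e = (1; 0)`. -/
def idE {k : ℕ} : E k := mk (fun j => if j = 0 then 1 else 0)

/-- First Jordan frame vector `c₁(x) = ½(1; x̄/‖x̄‖)`. -/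
def c1 {k : ℕ} (x : E k) : E k :=
  mk (fun j => if j = 0 then 1 / 2 else x j / (2 * tnorm x))

/-- Second Jordan frame vector `c₂(x) = ½(1; −x̄/‖x̄‖)`. -/
def c2 {k : ℕ} (x : E k) : E k :=
  mk (fun j => if j = 0 then 1 / 2 else -x j / (2 * tnorm x))

/-- Arrowhead matrix `Arw(x) = [[x₀, x̄ᵀ], [x̄, x₀ I]]`. -/
def Arw {k : ℕ} (x : E k) : Matrix (Fin (k + 1)) (Fin (k + 1)) ℝ :=
  Matrix.of fun i j =>
    if i = 0 then x j else if j = 0 then x i else if i = j then x 0 else 0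

/-- Quadratic representation `Q_x = 2 Arw(x)² − Arw(x ∘ x)`. -/
def Qmat {k : ℕ} (x : E k) : Matrix (Fin (k + 1)) (Fin (k + 1)) ℝ :=
  (2 : ℝ) • (Arw x * Arw x) - Arw (jmul x x)

/-- Jordan square root `x^{1/2} = √λ₁ c₁ + √λ₂ c₂` (equal to `(√x₀; 0)` when `x̄ = 0`). -/
def jsqrt {k : ℕ} (x : E k) : E k :=
  if tnorm x = 0 then mk (fun j => if j = 0 then Real.sqrt (x 0) else 0)
  else Real.sqrt (lam1 x) • c1 x + Real.sqrt (lam2 x) • c2 x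

/-- `T_x := Q_{x^{1/2}}`. -/
def Tmat {k : ℕ} (x : E k) : Matrix (Fin (k + 1)) (Fin (k + 1)) ℝ := Qmat (jsqrt x)

/-- Jordan inverse `x⁻¹ = λ₁⁻¹ c₁ + λ₂⁻¹ c₂` (equal to `(x₀⁻¹; 0)` when `x̄ = 0`). -/
def jinv {k : ℕ} (x : E k) : E k :=
  if tnorm x = 0 then mk (fun j => if j = 0 then (x 0)⁻¹ else 0)
  else (lam1 x)⁻¹ • c1 x + (lam2 x)⁻¹ • c2 x

/-- Matrix-vector product, as a map on `E k`. -/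
def mulVecE {k : ℕ} (M : Matrix (Fin (k + 1)) (Fin (k + 1)) ℝ) (v : E k) : E k :=
  mk (M.mulVec (WithLp.equiv 2 _ v))

/-- Block vectors `x = (x₁; …; x_r)` with `x_i ∈ ℝ^{d i + 2}` (so each block has dim ≥ 2). -/
abbrev BV {r : ℕ} (d : Fin r → ℕ) : Type := (i : Fin r) → E (d i + 1)

variable {r : ℕ} {d : Fin r → ℕ}

/-- Spectral norm `‖x‖₂ = max_i (|x_{i,0}| + ‖x̄_i‖)`. -/
def specNorm (x : BV d) : ℝ := ⨆ i, (|x i 0| + tnorm (x i))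

/-- Frobenius norm `‖x‖_F = √(Σ_i (λ₁(x_i)² + λ₂(x_i)²))`. -/
def frobNorm (x : BV d) : ℝ := Real.sqrt (∑ i, (lam1 (x i) ^ 2 + lam2 (x i) ^ 2))

/-- Minimum Jordan eigenvalue `λ_min(x) = min_i λ₂(x_i)`. -/
def lamMin (x : BV d) : ℝ := ⨅ i, lam2 (x i)

/-- Blockwise Jordan product. -/
def jmulB (x y : BV d) : BV d := fun i => jmul (x i) (y i)

/-- Block identity element. -/
def idB : BV d := fun _ => idE

/-- Membership in the interior of the product of Lorentz cones: `‖x̄_i‖ < x_{i,0}` for all `i`. -/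
def inIntLB (x : BV d) : Prop := ∀ i, tnorm (x i) < x i 0

/-- Euclidean inner product of the concatenated vectors. -/
def ip (x y : BV d) : ℝ := ∑ i, ∑ j, x i j * y i j

/-- Block-diagonal application of `T_x`: `(T_x s)_i = T_{x_i} s_i`. -/
def TB (x s : BV d) : BV d := fun i => mulVecE (Tmat (x i)) (s i)

/-- Distance from the central path `d(x, s, ν) = ‖T_x s − ν e‖_F`. -/
def cdist (x s : BV d) (ν : ℝ) : ℝ := frobNorm (TB x s - ν • (idB : BV d))

/-- Blockwise Jordan inverse. -/
def jinvB (x : BV d) : BV d := fun i => jinv (x i)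


-- ===== auxiliary lemmas =====

lemma mk_apply {k : ℕ} (f : Fin (k + 1) → ℝ) (j : Fin (k + 1)) : mk f j = f j := rfl

lemma tnorm_nonneg {k : ℕ} (x : E k) : 0 ≤ tnorm x := Real.sqrt_nonneg _

lemma tnorm_sq {k : ℕ} (x : E k) : tnorm x ^ 2 = ∑ i : Fin k, (x i.succ) ^ 2 :=
  Real.sq_sqrt (Finset.sum_nonneg fun _ _ => sq_nonneg _)

/-- squared "norm" of a block. -/
def Nk {k : ℕ} (x : E k) : ℝ := (x 0) ^ 2 + tnorm x ^ 2

lemma Nk_nonneg {k : ℕ} (x : E k) : 0 ≤ Nk x := by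
  unfold Nk; positivity

lemma frob_eq {r : ℕ} {d : Fin r → ℕ} (x : BV d) :
    frobNorm x = Real.sqrt (∑ i, 2 * Nk (x i)) := by
  unfold frobNorm Nk lam1 lam2
  congr 1
  refine Finset.sum_congr rfl fun i _ => by ring

lemma frob_nonneg {r : ℕ} {d : Fin r → ℕ} (x : BV d) : 0 ≤ frobNorm x :=
  Real.sqrt_nonneg _

lemma frob_sq {r : ℕ} {d : Fin r → ℕ} (x : BV d) :
    frobNorm x ^ 2 = ∑ i, 2 * Nk (x i) := by
  rw [frob_eq]
  exact Real.sq_sqrt (Finset.sum_nonneg fun i _ => by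
    have := Nk_nonneg (x i); linarith)

lemma blocknorm_le_frob {r : ℕ} {d : Fin r → ℕ} (x : BV d) (i : Fin r) :
    |x i 0| + tnorm (x i) ≤ frobNorm x := by
  have h1 : (|x i 0| + tnorm (x i)) ^ 2 ≤ 2 * Nk (x i) := by
    have := sq_nonneg (|x i 0| - tnorm (x i))
    have h := sq_abs (x i 0)
    unfold Nk; nlinarith
  have h2 : 2 * Nk (x i) ≤ ∑ j, 2 * Nk (x j) :=
    Finset.single_le_sum (f := fun j => 2 * Nk (x j))
      (fun j _ => mul_nonneg (by norm_num) (Nk_nonneg (x j))) (Finset.mem_univ i)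
  have h3 : 0 ≤ |x i 0| + tnorm (x i) := by
    have := abs_nonneg (x i 0); have := tnorm_nonneg (x i); linarith
  calc |x i 0| + tnorm (x i) = Real.sqrt ((|x i 0| + tnorm (x i)) ^ 2) :=
        (Real.sqrt_sq h3).symm
    _ ≤ Real.sqrt (∑ j, 2 * Nk (x j)) := Real.sqrt_le_sqrt (by linarith)
    _ = frobNorm x := (frob_eq x).symm

lemma idE_zero {k : ℕ} : (idE : E k) 0 = 1 := rfl

lemma idE_succ {k : ℕ} (i : Fin k) : (idE : E k) i.succ = 0 := by
  show (if i.succ = 0 then (1:ℝ) else 0) = 0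
  simp [Fin.succ_ne_zero]

lemma tnorm_idE_add {k : ℕ} (v : E k) : tnorm (idE + v) = tnorm v := by
  unfold tnorm
  congr 1
  refine Finset.sum_congr rfl fun i _ => ?_
  have : (idE + v : E k) i.succ = idE i.succ + v i.succ := rfl
  rw [this, idE_succ]; ring

lemma lam2_idE_add {k : ℕ} (v : E k) : lam2 (idE + v) = 1 + v 0 - tnorm v := by
  unfold lam2
  rw [tnorm_idE_add]
  have : (idE + v : E k) 0 = (idE : E k) 0 + v 0 := rfl
  rw [this, idE_zero]

lemma lam2_lower {k : ℕ} (v : E k) (c : ℝ) (h : |v 0| + tnorm v ≤ c) :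
    1 - c ≤ lam2 (idE + v) := by
  rw [lam2_idE_add]
  have := neg_abs_le (v 0)
  linarith

/-- Explicit formula for the Jordan inverse of a strictly feasible element. -/
lemma jinv_apply {k : ℕ} (x : E k) (hx : tnorm x < x 0) (j : Fin (k + 1)) :
    jinv x j = (if j = 0 then x 0 else -x j) / ((x 0) ^ 2 - tnorm x ^ 2) := by
  have ht0 : 0 ≤ tnorm x := tnorm_nonneg x
  have ha : 0 < x 0 := lt_of_le_of_lt ht0 hx
  have hD : 0 < (x 0) ^ 2 - tnorm x ^ 2 := by nlinarith
  by_cases h : tnorm x = 0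
  · rw [jinv, if_pos h, mk_apply]
    rcases eq_or_ne j 0 with hj | hj
    · rw [if_pos hj, if_pos hj, h]
      field_simp
      ring
    · rw [if_neg hj, if_neg hj]
      obtain ⟨i, rfl⟩ := Fin.exists_succ_eq.2 hj
      have hsum : ∑ i : Fin k, (x i.succ) ^ 2 = 0 := by
        have := tnorm_sq x
        rw [h] at this
        linarith [this]
      have hxi : x i.succ = 0 := by
        have := (Finset.sum_eq_zero_iff_of_nonneg
          (fun i _ => sq_nonneg (x i.succ))).1 hsum i (Finset.mem_univ i)
        exact pow_eq_zero_iff (n := 2) (by norm_num) |>.1 this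
      rw [hxi]; simp
  · rw [jinv, if_neg h]
    have ht : 0 < tnorm x := lt_of_le_of_ne ht0 (Ne.symm h)
    have hl1 : lam1 x = x 0 + tnorm x := rfl
    have hl2 : lam2 x = x 0 - tnorm x := rfl
    have hl1p : (0:ℝ) < x 0 + tnorm x := by linarith
    have hl2p : (0:ℝ) < x 0 - tnorm x := by linarith
    have happ : ((lam1 x)⁻¹ • c1 x + (lam2 x)⁻¹ • c2 x) j
        = (lam1 x)⁻¹ * c1 x j + (lam2 x)⁻¹ * c2 x j := rfl
    rw [happ, hl1, hl2]
    rcases eq_or_ne j 0 with hj | hj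
    · have hc1 : c1 x j = 1 / 2 := by rw [c1, mk_apply, if_pos hj]
      have hc2 : c2 x j = 1 / 2 := by rw [c2, mk_apply, if_pos hj]
      rw [hc1, hc2, if_pos hj]
      field_simp
      ring
    · have hc1 : c1 x j = x j / (2 * tnorm x) := by rw [c1, mk_apply, if_neg hj]
      have hc2 : c2 x j = -x j / (2 * tnorm x) := by rw [c2, mk_apply, if_neg hj]
      rw [hc1, hc2, if_neg hj]
      field_simp
      ring

lemma core_poly (a b p q s : ℝ) (hp : 0 ≤ p) (hq : 0 ≤ q) (hs : s ≤ p * q)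
    (hpa : p < a) (hqb : q < b) :
    (a * (b^2-q^2) - b * (a^2-p^2))^2 + p^2*(b^2-q^2)^2
        - 2*s*((a^2-p^2)*(b^2-q^2)) + q^2*(a^2-p^2)^2
      ≤ ((a-b)^2 + p^2 - 2*s + q^2) * ((a+p)*(b+q))^2 := by
  have ha : 0 < a := lt_of_le_of_lt hp hpa
  have hb : 0 < b := lt_of_le_of_lt hq hqb
  have h2 : 0 ≤ (a+p)*(b+q) - (a-p)*(b-q) := by nlinarith
  have h3 : (0:ℝ) < (a+p)*(b+q) := by positivity
  have h4 : 0 ≤ ((a+p)*(b+q))^2 - ((a-p)*(b-q))^2 := by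
    nlinarith [mul_pos (show (0:ℝ) < a-p by linarith) (show (0:ℝ) < b-q by linarith)]
  have hid : ((a-b)^2 + p^2 - 2*s + q^2) * ((a+p)*(b+q))^2
      - ((a * (b^2-q^2) - b * (a^2-p^2))^2 + p^2*(b^2-q^2)^2
          - 2*s*((a^2-p^2)*(b^2-q^2)) + q^2*(a^2-p^2)^2)
      = (1/2) * ((a+p)-(b+q))^2 * (((a+p)*(b+q))^2 - ((a-p)*(b-q))^2)
        + 2 * (p*q - s) * ((a+p)*(b+q)) * ((a+p)*(b+q) - (a-p)*(b-q)) := by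
    ring
  have t1 : 0 ≤ (1/2) * ((a+p)-(b+q))^2 * (((a+p)*(b+q))^2 - ((a-p)*(b-q))^2) :=
    mul_nonneg (mul_nonneg (by norm_num) (sq_nonneg _)) h4
  have t2 : 0 ≤ 2 * (p*q - s) * ((a+p)*(b+q)) * ((a+p)*(b+q) - (a-p)*(b-q)) :=
    mul_nonneg (mul_nonneg (mul_nonneg (by norm_num) (by linarith)) (le_of_lt h3)) h2
  linarith

lemma jinv_sub_bound {k : ℕ} (x y : E k) (hx : tnorm x < x 0) (hy : tnorm y < y 0) :
    Nk (jinv x - jinv y) ≤ Nk (x - y) / ((x 0 - tnorm x) * (y 0 - tnorm y)) ^ 2 := by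
  have hp : 0 ≤ tnorm x := tnorm_nonneg x
  have hq : 0 ≤ tnorm y := tnorm_nonneg y
  have ha : 0 < x 0 := lt_of_le_of_lt hp hx
  have hb : 0 < y 0 := lt_of_le_of_lt hq hy
  have hDx : 0 < (x 0)^2 - tnorm x ^2 := by nlinarith
  have hDy : 0 < (y 0)^2 - tnorm y ^2 := by nlinarith
  have hs : (∑ i : Fin k, x i.succ * y i.succ) ≤ tnorm x * tnorm y :=
    Real.sum_mul_le_sqrt_mul_sqrt Finset.univ _ _
  have hj0 : (jinv x - jinv y : E k) 0
      = x 0/((x 0)^2 - tnorm x ^2) - y 0/((y 0)^2 - tnorm y ^2) := by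
    have h : (jinv x - jinv y : E k) 0 = jinv x 0 - jinv y 0 := rfl
    rw [h, jinv_apply x hx 0, jinv_apply y hy 0]
    simp
  have htail : tnorm (jinv x - jinv y) ^ 2
      = tnorm x ^2/((x 0)^2 - tnorm x ^2)^2
        - 2*(∑ i : Fin k, x i.succ * y i.succ)/(((x 0)^2 - tnorm x ^2)*((y 0)^2 - tnorm y ^2))
        + tnorm y ^2/((y 0)^2 - tnorm y ^2)^2 := by
    rw [tnorm_sq]
    have hterm : ∀ i : Fin k, ((jinv x - jinv y : E k) i.succ)^2
        = (x i.succ)^2 * (1/((x 0)^2 - tnorm x ^2)^2)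
          - (x i.succ * y i.succ) * (2/(((x 0)^2 - tnorm x ^2)*((y 0)^2 - tnorm y ^2)))
          + (y i.succ)^2 * (1/((y 0)^2 - tnorm y ^2)^2) := by
      intro i
      have h : (jinv x - jinv y : E k) i.succ = jinv x i.succ - jinv y i.succ := rfl
      rw [h, jinv_apply x hx i.succ, jinv_apply y hy i.succ,
        if_neg (Fin.succ_ne_zero i), if_neg (Fin.succ_ne_zero i)]
      field_simp
      ring
    rw [Finset.sum_congr rfl fun i _ => hterm i, Finset.sum_add_distrib,
      Finset.sum_sub_distrib, ← Finset.sum_mul, ← Finset.sum_mul, ← Finset.sum_mul,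
      ← tnorm_sq, ← tnorm_sq]
    ring
  have hNxy : Nk (x - y) = (x 0 - y 0)^2
      + (tnorm x ^2 - 2*(∑ i : Fin k, x i.succ * y i.succ) + tnorm y ^2) := by
    unfold Nk
    have h0 : (x - y : E k) 0 = x 0 - y 0 := rfl
    rw [h0, tnorm_sq]
    have hterm : ∀ i : Fin k, ((x - y : E k) i.succ)^2
        = (x i.succ)^2 - (x i.succ * y i.succ) * 2 + (y i.succ)^2 := by
      intro i
      have h : (x - y : E k) i.succ = x i.succ - y i.succ := rfl
      rw [h]; ring
    rw [Finset.sum_congr rfl fun i _ => hterm i, Finset.sum_add_distrib,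
      Finset.sum_sub_distrib, ← Finset.sum_mul, ← tnorm_sq, ← tnorm_sq]
    ring
  have hL : Nk (jinv x - jinv y)
      = ((x 0 * ((y 0)^2 - tnorm y ^2) - y 0 * ((x 0)^2 - tnorm x ^2))^2
          + tnorm x ^2*((y 0)^2 - tnorm y ^2)^2
          - 2*(∑ i : Fin k, x i.succ * y i.succ)*(((x 0)^2 - tnorm x ^2)*((y 0)^2 - tnorm y ^2))
          + tnorm y ^2*((x 0)^2 - tnorm x ^2)^2)
        / (((x 0)^2 - tnorm x ^2)*((y 0)^2 - tnorm y ^2))^2 := by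
    unfold Nk
    rw [hj0, htail]
    field_simp
    ring
  have hR : Nk (x - y) / ((x 0 - tnorm x) * (y 0 - tnorm y)) ^ 2
      = (((x 0 - y 0)^2 + tnorm x ^2 - 2*(∑ i : Fin k, x i.succ * y i.succ) + tnorm y ^2)
          * ((x 0 + tnorm x)*(y 0 + tnorm y))^2)
        / (((x 0)^2 - tnorm x ^2)*((y 0)^2 - tnorm y ^2))^2 := by
    rw [hNxy]
    have h1 : x 0 - tnorm x ≠ 0 := by linarith
    have h2 : y 0 - tnorm y ≠ 0 := by linarith
    have h3 : x 0 + tnorm x ≠ 0 := by positivity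
    have h4 : y 0 + tnorm y ≠ 0 := by positivity
    rw [div_eq_div_iff (by positivity) (by positivity)]
    ring
  rw [hL, hR]
  exact div_le_div_of_nonneg_right
    (core_poly (x 0) (y 0) (tnorm x) (tnorm y) _ hp hq hs hx hy) (by positivity)

lemma sqrt_sum_sq_add_le {k : ℕ} (u v : Fin k → ℝ) :
    Real.sqrt (∑ i, (u i + v i) ^ 2)
      ≤ Real.sqrt (∑ i, u i ^ 2) + Real.sqrt (∑ i, v i ^ 2) := by
  have hA : 0 ≤ ∑ i, u i ^ 2 := Finset.sum_nonneg fun _ _ => sq_nonneg _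
  have hB : 0 ≤ ∑ i, v i ^ 2 := Finset.sum_nonneg fun _ _ => sq_nonneg _
  have hcs : ∑ i, u i * v i ≤ Real.sqrt (∑ i, u i ^ 2) * Real.sqrt (∑ i, v i ^ 2) :=
    Real.sum_mul_le_sqrt_mul_sqrt _ _ _
  have hexp : ∑ i, (u i + v i) ^ 2
      = (∑ i, u i ^ 2) + ((∑ i, u i * v i) * 2 + ∑ i, v i ^ 2) := by
    rw [Finset.sum_congr rfl (fun i _ => (by ring :
      (u i + v i) ^ 2 = u i ^ 2 + (u i * v i * 2 + v i ^ 2))),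
      Finset.sum_add_distrib, Finset.sum_add_distrib, Finset.sum_mul]
  have hle : ∑ i, (u i + v i) ^ 2
      ≤ (Real.sqrt (∑ i, u i ^ 2) + Real.sqrt (∑ i, v i ^ 2)) ^ 2 := by
    have h1 := Real.sq_sqrt hA
    have h2 := Real.sq_sqrt hB
    nlinarith [hcs]
  calc Real.sqrt (∑ i, (u i + v i) ^ 2)
      ≤ Real.sqrt ((Real.sqrt (∑ i, u i ^ 2) + Real.sqrt (∑ i, v i ^ 2)) ^ 2) :=
        Real.sqrt_le_sqrt hle
    _ = _ := Real.sqrt_sq (by positivity)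

lemma tnorm_le_add {k : ℕ} (a b : E k) : tnorm b ≤ tnorm a + tnorm (a - b) := by
  have h := sqrt_sum_sq_add_le (fun i : Fin k => a i.succ)
    (fun i : Fin k => b i.succ - a i.succ)
  have e1 : ∑ i : Fin k, (a i.succ + (b i.succ - a i.succ)) ^ 2
      = ∑ i : Fin k, (b i.succ) ^ 2 :=
    Finset.sum_congr rfl fun i _ => by ring
  have e2 : ∑ i : Fin k, (b i.succ - a i.succ) ^ 2
      = ∑ i : Fin k, ((a - b : E k) i.succ) ^ 2 :=
    Finset.sum_congr rfl fun i _ => by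
      have : (a - b : E k) i.succ = a i.succ - b i.succ := rfl
      rw [this]; ring
  rw [e1, e2] at h
  exact h

lemma spec_block {k : ℕ} (x : E k) (hx : tnorm x < x 0) :
    |jinv x 0| + tnorm (jinv x) = 1 / (x 0 - tnorm x) := by
  have ht0 : 0 ≤ tnorm x := tnorm_nonneg x
  have ha : 0 < x 0 := lt_of_le_of_lt ht0 hx
  have hD : 0 < (x 0) ^ 2 - tnorm x ^ 2 := by nlinarith
  have hw0 : jinv x 0 = x 0 / ((x 0) ^ 2 - tnorm x ^ 2) := by
    rw [jinv_apply _ hx 0]; simp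
  have hsq : tnorm (jinv x) ^ 2 = (tnorm x / ((x 0) ^ 2 - tnorm x ^ 2)) ^ 2 := by
    rw [tnorm_sq]
    have hterm : ∀ j : Fin k, (jinv x j.succ) ^ 2
        = (x j.succ) ^ 2 * (1 / ((x 0) ^ 2 - tnorm x ^ 2) ^ 2) := by
      intro j
      rw [jinv_apply _ hx j.succ, if_neg (Fin.succ_ne_zero j)]
      field_simp
    rw [Finset.sum_congr rfl fun j _ => hterm j, ← Finset.sum_mul, ← tnorm_sq]
    field_simp
  have hwt : tnorm (jinv x) = tnorm x / ((x 0) ^ 2 - tnorm x ^ 2) := by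
    calc tnorm (jinv x) = Real.sqrt (tnorm (jinv x) ^ 2) :=
          (Real.sqrt_sq (tnorm_nonneg _)).symm
      _ = _ := by rw [hsq]; exact Real.sqrt_sq (by positivity)
  rw [hw0, hwt, abs_of_nonneg (by positivity)]
  have h1 : x 0 - tnorm x ≠ 0 := by linarith
  have h2 : x 0 + tnorm x ≠ 0 := by positivity
  field_simp
  ring

/-- For a block vector `z` with `‖z‖_F < 1`: `λ_min(e + z) ≥ 1 − ‖z‖_F > 0`,
`‖(e + z)⁻¹‖₂ ≤ 1/(1 − ‖z‖_F)`, and if `‖z − ẑ‖_F ≤ ξ` with `‖z‖_F + ξ < 1` then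
`‖(e + z)⁻¹ − (e + ẑ)⁻¹‖_F ≤ ξ/(1 − ‖z‖_F − ξ)²`. -/
theorem jinv_perturbation_bound {r : ℕ} {d : Fin r → ℕ} (hr : 0 < r) (z z' : BV d)
    (hz : frobNorm z < 1) :
    (1 - frobNorm z ≤ lamMin (idB + z) ∧ 0 < 1 - frobNorm z) ∧
    specNorm (jinvB (idB + z)) ≤ 1 / (1 - frobNorm z) ∧
    (∀ ξ : ℝ, 0 ≤ ξ → frobNorm (z - z') ≤ ξ → frobNorm z + ξ < 1 →
      frobNorm (jinvB (idB + z) - jinvB (idB + z')) ≤ ξ / (1 - frobNorm z - ξ) ^ 2) := by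
  haveI : Nonempty (Fin r) := Fin.pos_iff_nonempty.mp hr
  have hF0 : 0 ≤ frobNorm z := frob_nonneg z
  have hpos : 0 < 1 - frobNorm z := by linarith
  have hlam : ∀ i : Fin r, 1 - frobNorm z ≤ lam2 ((idB + z : BV d) i) :=
    fun i => lam2_lower (z i) (frobNorm z) (blocknorm_le_frob z i)
  have hfeas : ∀ i : Fin r, tnorm ((idB + z : BV d) i) < (idB + z : BV d) i 0 := by
    intro i
    have h2 : 0 < lam2 ((idB + z : BV d) i) := lt_of_lt_of_le hpos (hlam i)
    unfold lam2 at h2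
    linarith
  refine ⟨⟨le_ciInf fun i => hlam i, hpos⟩, ?_, ?_⟩
  · -- spectral norm bound
    apply ciSup_le
    intro i
    have hfi := hfeas i
    show |jinv ((idB + z : BV d) i) 0| + tnorm (jinv ((idB + z : BV d) i))
        ≤ 1 / (1 - frobNorm z)
    rw [spec_block _ hfi]
    apply one_div_le_one_div_of_le hpos
    have h := hlam i
    unfold lam2 at h
    linarith
  · -- perturbation bound
    intro ξ hξ hzz hlt
    have hm : 0 < 1 - frobNorm z - ξ := by linarith
    have hz'block : ∀ i, |z' i 0| + tnorm (z' i) ≤ frobNorm z + ξ := by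
      intro i
      have h3 : |(z - z' : BV d) i 0| + tnorm ((z - z' : BV d) i) ≤ ξ :=
        le_trans (blocknorm_le_frob (z - z') i) hzz
      have h4 : |z i 0| + tnorm (z i) ≤ frobNorm z := blocknorm_le_frob z i
      have h5 : |z' i 0| ≤ |z i 0| + |(z - z' : BV d) i 0| := by
        have he : (z - z' : BV d) i 0 = z i 0 - z' i 0 := rfl
        rw [he]
        have h6 := abs_sub_abs_le_abs_sub (z' i 0) (z i 0)
        rw [abs_sub_comm] at h6
        linarith
      have h7 : tnorm (z' i) ≤ tnorm (z i) + tnorm ((z - z' : BV d) i) :=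
        tnorm_le_add (z i) (z' i)
      linarith
    have hlam' : ∀ i : Fin r, 1 - (frobNorm z + ξ) ≤ lam2 ((idB + z' : BV d) i) :=
      fun i => lam2_lower (z' i) _ (hz'block i)
    have hfeas' : ∀ i : Fin r, tnorm ((idB + z' : BV d) i) < (idB + z' : BV d) i 0 := by
      intro i
      have h2 : 0 < lam2 ((idB + z' : BV d) i) := by
        have := hlam' i
        linarith
      unfold lam2 at h2
      linarith
    have hblock : ∀ i : Fin r,
        Nk ((jinvB (idB + z) - jinvB (idB + z') : BV d) i)
          ≤ Nk ((z - z' : BV d) i) / (1 - frobNorm z - ξ) ^ 4 := by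
      intro i
      have hx := hfeas i
      have hy := hfeas' i
      have hb := jinv_sub_bound ((idB + z : BV d) i) ((idB + z' : BV d) i) hx hy
      have e1 : 1 - frobNorm z - ξ
          ≤ (idB + z : BV d) i 0 - tnorm ((idB + z : BV d) i) := by
        have h := hlam i
        unfold lam2 at h
        linarith
      have e2 : 1 - frobNorm z - ξ
          ≤ (idB + z' : BV d) i 0 - tnorm ((idB + z' : BV d) i) := by
        have h := hlam' i
        unfold lam2 at h
        linarith
      have hveq : (idB + z : BV d) i - (idB + z' : BV d) i = (z - z' : BV d) i := by
        show (idE + z i) - (idE + z' i) = z i - z' i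
        abel
      have hprod : (1 - frobNorm z - ξ) ^ 2
          ≤ ((idB + z : BV d) i 0 - tnorm ((idB + z : BV d) i))
            * ((idB + z' : BV d) i 0 - tnorm ((idB + z' : BV d) i)) := by
        nlinarith
      have hfinal : Nk ((z - z' : BV d) i)
            / (((idB + z : BV d) i 0 - tnorm ((idB + z : BV d) i))
              * ((idB + z' : BV d) i 0 - tnorm ((idB + z' : BV d) i))) ^ 2
          ≤ Nk ((z - z' : BV d) i) / (1 - frobNorm z - ξ) ^ 4 := by
        have h1 : (0:ℝ) < ((1 - frobNorm z - ξ) ^ 2) ^ 2 := by positivity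
        have h2 : ((1 - frobNorm z - ξ) ^ 2) ^ 2
            ≤ (((idB + z : BV d) i 0 - tnorm ((idB + z : BV d) i))
              * ((idB + z' : BV d) i 0 - tnorm ((idB + z' : BV d) i))) ^ 2 :=
          pow_le_pow_left₀ (by positivity) hprod 2
        calc Nk ((z - z' : BV d) i)
              / (((idB + z : BV d) i 0 - tnorm ((idB + z : BV d) i))
                * ((idB + z' : BV d) i 0 - tnorm ((idB + z' : BV d) i))) ^ 2
            ≤ Nk ((z - z' : BV d) i) / ((1 - frobNorm z - ξ) ^ 2) ^ 2 := by
              apply div_le_div_of_nonneg_left (Nk_nonneg _) h1 h2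
          _ = Nk ((z - z' : BV d) i) / (1 - frobNorm z - ξ) ^ 4 := by
              rw [← pow_mul]
      calc Nk ((jinvB (idB + z) - jinvB (idB + z') : BV d) i)
          = Nk (jinv ((idB + z : BV d) i) - jinv ((idB + z' : BV d) i)) := rfl
        _ ≤ Nk ((idB + z : BV d) i - (idB + z' : BV d) i)
              / (((idB + z : BV d) i 0 - tnorm ((idB + z : BV d) i))
                * ((idB + z' : BV d) i 0 - tnorm ((idB + z' : BV d) i))) ^ 2 := hb
        _ = Nk ((z - z' : BV d) i)
              / (((idB + z : BV d) i 0 - tnorm ((idB + z : BV d) i))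
                * ((idB + z' : BV d) i 0 - tnorm ((idB + z' : BV d) i))) ^ 2 := by
            rw [hveq]
        _ ≤ _ := hfinal
    -- sum up
    rw [frob_eq]
    have hsum1 : ∑ i, 2 * Nk ((jinvB (idB + z) - jinvB (idB + z') : BV d) i)
        ≤ (∑ i, 2 * Nk ((z - z' : BV d) i)) / (1 - frobNorm z - ξ) ^ 4 := by
      rw [Finset.sum_div]
      refine Finset.sum_le_sum fun i _ => ?_
      have := hblock i
      rw [mul_div_assoc]
      linarith
    have hsum2 : (∑ i, 2 * Nk ((z - z' : BV d) i)) = frobNorm (z - z') ^ 2 :=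
      (frob_sq (z - z')).symm
    have hsum3 : frobNorm (z - z') ^ 2 ≤ ξ ^ 2 :=
      pow_le_pow_left₀ (frob_nonneg _) hzz 2
    have hfin : ∑ i, 2 * Nk ((jinvB (idB + z) - jinvB (idB + z') : BV d) i)
        ≤ (ξ / (1 - frobNorm z - ξ) ^ 2) ^ 2 := by
      have : (ξ / (1 - frobNorm z - ξ) ^ 2) ^ 2 = ξ ^ 2 / (1 - frobNorm z - ξ) ^ 4 := by
        rw [div_pow, ← pow_mul]
      rw [this]
      calc ∑ i, 2 * Nk ((jinvB (idB + z) - jinvB (idB + z') : BV d) i)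
          ≤ (∑ i, 2 * Nk ((z - z' : BV d) i)) / (1 - frobNorm z - ξ) ^ 4 := hsum1
        _ ≤ ξ ^ 2 / (1 - frobNorm z - ξ) ^ 4 := by
            apply div_le_div_of_nonneg_right ?_ (by positivity)
            rw [hsum2]; exact hsum3
    calc Real.sqrt (∑ i, 2 * Nk ((jinvB (idB + z) - jinvB (idB + z') : BV d) i))
        ≤ Real.sqrt ((ξ / (1 - frobNorm z - ξ) ^ 2) ^ 2) := Real.sqrt_le_sqrt hfin
      _ = ξ / (1 - frobNorm z - ξ) ^ 2 := Real.sqrt_sq (by positivity)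
end SOCP
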